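/- Let U ⊆ U′ ⊆ V be subspaces and let ϖ : U × U′ → ℝ be a bilinear map whose restriction to U × U is skew-symmetric. If F is an isotropic subspace of V × V* such that pr_V F = U, pr_V F^⊥ = U′, and a(w) = ϖ(v,w) for every (v,a) ∈ F and (w,b) ∈ F^⊥, then F = {(v,a) ∈ V × V* : v ∈ U and a(w) = ϖ(v,w) for all w ∈ U′}. In other words, the isotropic subspace with prescribed projections U, U′ and prescribed pairing ϖ is unique. -/

import Mathlib

open Module LinearMap

/-- The pairing metric `g((X,α),(Y,β)) = (1/2)(α(Y) + β(X))` on `V × V*`. -/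
noncomputable def bigG (V : Type*) [AddCommGroup V] [Module ℝ V] :
    LinearMap.BilinForm ℝ (V × Module.Dual ℝ V) :=
  LinearMap.mk₂ ℝ (fun p q => (1 / 2 : ℝ) * (p.2 q.1 + q.2 p.1))
    (fun p p' q => by simp; ring)
    (fun c p q => by simp; ring)
    (fun p q q' => by simp; ring)
    (fun c p q => by simp; ring)

/-- The `g`-orthogonal complement of a subspace of `V × V*`. -/
noncomputable def gOrth {V : Type*} [AddCommGroup V] [Module ℝ V]
    (E : Submodule ℝ (V × Module.Dual ℝ V)) : Submodule ℝ (V × Module.Dual ℝ V) :=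
  LinearMap.BilinForm.orthogonal (bigG V) E

lemma bigG_apply {V : Type*} [AddCommGroup V] [Module ℝ V]
    (p q : V × Module.Dual ℝ V) :
    bigG V p q = (1 / 2 : ℝ) * (p.2 q.1 + q.2 p.1) := rfl

lemma bigG_symm {V : Type*} [AddCommGroup V] [Module ℝ V] :
    (bigG V).IsSymm := by
  refine ⟨fun p q => ?_⟩
  simp [bigG_apply]
  ring

lemma bigG_nondeg (V : Type*) [AddCommGroup V] [Module ℝ V] [FiniteDimensional ℝ V] :
    (bigG V).Nondegenerate := by
  refine (LinearMap.IsRefl.nondegenerate_iff_separatingLeft (B := bigG V) bigG_symm.isRefl).mpr ?_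
  intro p hp
  have hα : p.2 = 0 := by
    ext y
    have := hp (y, 0)
    simp [bigG_apply] at this
    simpa using this
  have hX : p.1 = 0 := by
    rw [← Module.forall_dual_apply_eq_zero_iff ℝ p.1]
    intro φ
    have := hp (0, φ)
    simp [bigG_apply] at this
    simpa using this
  exact Prod.ext hX hα

/-- Uniqueness: an isotropic subspace `F` with prescribed projections
`pr_V F = U`, `pr_V F^⊥ = U′` and prescribed pairing `ϖ` must equal
`{(v,a) : v ∈ U, a(w) = ϖ(v,w) ∀ w ∈ U′}`. -/
theorem stmt3 (V : Type*) [AddCommGroup V] [Module ℝ V] [FiniteDimensional ℝ V]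
    (U U' : Submodule ℝ V) (hUU' : U ≤ U')
    (ϖ : U →ₗ[ℝ] U' →ₗ[ℝ] ℝ)
    (hskew : ∀ u w : U, ϖ u (Submodule.inclusion hUU' w) = -ϖ w (Submodule.inclusion hUU' u))
    (F : Submodule ℝ (V × Dual ℝ V))
    (hiso : ∀ p ∈ F, ∀ q ∈ F, bigG V p q = 0)
    (hprF : Submodule.map (LinearMap.fst ℝ V (Dual ℝ V)) F = U)
    (hprF' : Submodule.map (LinearMap.fst ℝ V (Dual ℝ V)) (gOrth F) = U')
    (hpair : ∀ (v : U) (w : U') (a b : Dual ℝ V),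
      ((v : V), a) ∈ F → ((w : V), b) ∈ gOrth F → a w = ϖ v w) :
    (F : Set (V × Dual ℝ V)) =
      {p : V × Dual ℝ V | ∃ hv : p.1 ∈ U, ∀ w : U', p.2 w = ϖ ⟨p.1, hv⟩ w} := by
  have refl : (bigG V).IsRefl := bigG_symm.isRefl
  -- forward direction, as a lemma
  have fwd : ∀ p ∈ F, ∃ hv : p.1 ∈ U, ∀ w : U', p.2 w = ϖ ⟨p.1, hv⟩ w := by
    intro p hp
    have hv : p.1 ∈ U := by
      rw [← hprF]
      exact ⟨p, hp, rfl⟩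
    refine ⟨hv, fun w => ?_⟩
    have hw : (w : V) ∈ Submodule.map (LinearMap.fst ℝ V (Dual ℝ V)) (gOrth F) := by
      rw [hprF']; exact w.2
    obtain ⟨q, hq, hq1⟩ := hw
    have := hpair ⟨p.1, hv⟩ w p.2 q.2 hp (by rwa [show ((w : V), q.2) = q from Prod.ext hq1.symm rfl])
    exact this
  ext p
  constructor
  · exact fun hp => fwd p hp
  · rintro ⟨hv, hw⟩
    have hv' : p.1 ∈ Submodule.map (LinearMap.fst ℝ V (Dual ℝ V)) F := by rw [hprF]; exact hv
    obtain ⟨q, hq, hq1⟩ := hv'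
    obtain ⟨hv2, hw2⟩ := fwd q hq
    -- the difference c = p.2 - q.2 annihilates U'
    have hcann : ∀ w : U', (p.2 - q.2) (w : V) = 0 := by
      intro w
      have h1 := hw w
      have h2 := hw2 w
      have hq1' : q.1 = p.1 := hq1
      have he : (⟨p.1, hv⟩ : U) = ⟨q.1, hv2⟩ := Subtype.ext hq1'.symm
      simp only [LinearMap.sub_apply]
      rw [h1, h2, he, sub_self]
    -- (0, p.2 - q.2) ∈ gOrth (gOrth F)
    have hmem : ((0 : V), p.2 - q.2) ∈ gOrth (gOrth F) := by
      intro r hr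
      have hr1 : r.1 ∈ U' := by rw [← hprF']; exact ⟨r, hr, rfl⟩
      have := hcann ⟨r.1, hr1⟩
      simp only [LinearMap.BilinForm.IsOrtho, bigG_apply]
      simp [this]
    have hFF : gOrth (gOrth F) = F := by
      unfold gOrth
      exact LinearMap.BilinForm.orthogonal_orthogonal (bigG_nondeg V) refl F
    rw [hFF] at hmem
    have : p = q + ((0 : V), p.2 - q.2) := by
      have hq1' : q.1 = p.1 := hq1
      refine Prod.ext ?_ ?_ <;> simp [hq1'.symm]
    rw [this]
    exact F.add_mem hq hmem
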